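/- Almost surely, on the event that Γ^R lies below R and ψ(Γ^R(r)) ≥ 0, the geodesic Γ_n satisfies ψ(Γ_n(r)) ≥ 0. (That is, the event E^R is contained in the event E = {ψ(Γ_n(r)) ≥ 0}: increasing the weights in R from 0 can only increase the transversal fluctuation of the geodesic at 𝓛_r.) -/

import Mathlib

open MeasureTheory ProbabilityTheory

namespace LPP

/-- A configuration of vertex weights on `ℤ²`. -/
abbrev Config := (ℤ × ℤ) → ℝ

/-- One up-right step on the lattice: exactly one coordinate increases by 1. -/
def UpStep (p q : ℤ × ℤ) : Prop := q = (p.1 + 1, p.2) ∨ q = (p.1, p.2 + 1)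

/-- `γ` is an up-right path from `u` to `v`. -/
def IsUpRightPath (γ : List (ℤ × ℤ)) (u v : ℤ × ℤ) : Prop :=
  γ.head? = some u ∧ γ.getLast? = some v ∧ γ.Chain' UpStep

/-- Passage time of a path: the sum of the weights of its vertices except the terminal one. -/
noncomputable def pathTime (ω : Config) (γ : List (ℤ × ℤ)) : ℝ :=
  (γ.dropLast.map ω).sum

/-- Last passage time from `u` to `v`: the maximal passage time over up-right paths. -/
noncomputable def lpt (ω : Config) (u v : ℤ × ℤ) : ℝ :=
  sSup (pathTime ω '' {γ | IsUpRightPath γ u v})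

/-- `γ` is a geodesic from `u` to `v`: an up-right path attaining the last passage time. -/
def IsGeodesic (ω : Config) (γ : List (ℤ × ℤ)) (u v : ℤ × ℤ) : Prop :=
  IsUpRightPath γ u v ∧ pathTime ω γ = lpt ω u v

/-- The family `X` of vertex weights is an i.i.d. family of rate-1 exponential
random variables under the probability measure `P`. -/
def IsIIDExp {Ω : Type*} [MeasurableSpace Ω] (P : Measure Ω) (X : ℤ × ℤ → Ω → ℝ) : Prop :=
  (∀ u, Measurable (X u)) ∧
    iIndepFun X P ∧
    ∀ u, P.map (X u) = expMeasure 1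

/-- The translated rectangle
`R = {p : 2r/3 ≤ φ(p) ≤ 4r/3, 2(t+1)r^{2/3} - r^{2/3}/2 ≤ ψ(p) ≤ 2(t+1)r^{2/3} + r^{2/3}/2}`. -/
noncomputable def Rbox (r : ℕ) (t : ℝ) : Set (ℤ × ℤ) :=
  {p | 2 * (r : ℝ) / 3 ≤ ((p.1 + p.2 : ℤ) : ℝ) ∧ ((p.1 + p.2 : ℤ) : ℝ) ≤ 4 * (r : ℝ) / 3 ∧
       2 * (t + 1) * (r : ℝ) ^ ((2 : ℝ) / 3) - (r : ℝ) ^ ((2 : ℝ) / 3) / 2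
         ≤ ((p.2 - p.1 : ℤ) : ℝ) ∧
       ((p.2 - p.1 : ℤ) : ℝ)
         ≤ 2 * (t + 1) * (r : ℝ) ^ ((2 : ℝ) / 3) + (r : ℝ) ^ ((2 : ℝ) / 3) / 2}

/-- `T^R(γ)`: the passage time of `γ` after discounting (setting to zero) the weights in `R`. -/
noncomputable def TR (ω : Config) (R : Set (ℤ × ℤ)) (γ : List (ℤ × ℤ)) : ℝ :=
  pathTime (Rᶜ.indicator ω) γ

/-- `γ` is an up-right path from `𝐨` to `𝐧` maximizing `T^R`. -/
def IsTRMax (ω : Config) (R : Set (ℤ × ℤ)) (n : ℕ) (γ : List (ℤ × ℤ)) : Prop :=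
  IsUpRightPath γ (0, 0) ((n : ℤ), (n : ℤ)) ∧
    ∀ γ', IsUpRightPath γ' (0, 0) ((n : ℤ), (n : ℤ)) → TR ω R γ' ≤ TR ω R γ

/-- `γ` lies below the rectangle `Rbox r t`: it is disjoint from it, and within the
vertical strip of the rectangle it stays strictly below it. -/
noncomputable def LiesBelow (γ : List (ℤ × ℤ)) (r : ℕ) (t : ℝ) : Prop :=
  (∀ p ∈ γ, p ∉ Rbox r t) ∧
    ∀ p ∈ γ, 2 * (r : ℝ) / 3 ≤ ((p.1 + p.2 : ℤ) : ℝ) → ((p.1 + p.2 : ℤ) : ℝ) ≤ 4 * (r : ℝ) / 3 →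
      ((p.2 - p.1 : ℤ) : ℝ) < 2 * (t + 1) * (r : ℝ) ^ ((2 : ℝ) / 3) - (r : ℝ) ^ ((2 : ℝ) / 3) / 2

lemma upStep_phi {p q : ℤ × ℤ} (h : UpStep p q) : q.1 + q.2 = p.1 + p.2 + 1 := by
  rcases h with h | h <;> subst h <;> simp <;> ring

lemma upStep_psi {p q : ℤ × ℤ} (h : UpStep p q) :
    q.2 - q.1 = p.2 - p.1 - 1 ∨ q.2 - q.1 = p.2 - p.1 + 1 := by
  rcases h with h | h <;> subst h <;> [left; right] <;> simp <;> ring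

lemma upStep_fst {p q : ℤ × ℤ} (h : UpStep p q) : p.1 ≤ q.1 := by
  rcases h with h | h <;> subst h <;> simp

lemma upStep_snd {p q : ℤ × ℤ} (h : UpStep p q) : p.2 ≤ q.2 := by
  rcases h with h | h <;> subst h <;> simp

variable {γ : List (ℤ × ℤ)} {u v : ℤ × ℤ}

lemma path_ne_nil (h : IsUpRightPath γ u v) : γ ≠ [] := by
  intro e; rw [e] at h; simp [IsUpRightPath] at h

lemma path_length_pos (h : IsUpRightPath γ u v) : 0 < γ.length :=
  List.length_pos_iff.mpr (path_ne_nil h)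

lemma path_getD_zero (h : IsUpRightPath γ u v) : γ.getD 0 (0, 0) = u := by
  have h0 : 0 < γ.length := path_length_pos h
  have := h.1
  rw [List.head?_eq_getElem?, List.getElem?_eq_getElem h0] at this
  rw [List.getD_eq_getElem _ _ h0]
  exact Option.some.inj this

lemma path_getD_last (h : IsUpRightPath γ u v) : γ.getD (γ.length - 1) (0, 0) = v := by
  have h0 : 0 < γ.length := path_length_pos h
  have h1 : γ.length - 1 < γ.length := by omega
  have := h.2.1
  rw [List.getLast?_eq_getElem?, List.getElem?_eq_getElem h1] at this
  rw [List.getD_eq_getElem _ _ h1]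
  exact Option.some.inj this

lemma path_chain (h : IsUpRightPath γ u v) {k : ℕ} (hk : k + 1 < γ.length) :
    UpStep (γ.getD k (0, 0)) (γ.getD (k + 1) (0, 0)) := by
  have := List.isChain_iff_getElem.mp h.2.2 k (by omega)
  rw [List.getD_eq_getElem _ _ (by omega), List.getD_eq_getElem _ _ hk]
  simpa [List.get_eq_getElem] using this

lemma path_phi (h : IsUpRightPath γ u v) : ∀ k, k < γ.length →
    (γ.getD k (0, 0)).1 + (γ.getD k (0, 0)).2 = u.1 + u.2 + k := by
  intro k
  induction k with
  | zero => intro hk; rw [path_getD_zero h]; simp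
  | succ k ih =>
      intro hk
      have h1 := upStep_phi (path_chain h hk)
      have h2 := ih (by omega)
      rw [h1, h2]; push_cast; ring

lemma path_length_phi (h : IsUpRightPath γ u v) :
    (γ.length : ℤ) = v.1 + v.2 - (u.1 + u.2) + 1 := by
  have h0 : 0 < γ.length := path_length_pos h
  have h1 := path_phi h (γ.length - 1) (by omega)
  rw [path_getD_last h] at h1
  have : ((γ.length - 1 : ℕ) : ℤ) = (γ.length : ℤ) - 1 := by
    rw [Nat.cast_sub (by omega)]; simp
  omega

lemma path_length_oN {n : ℕ} (h : IsUpRightPath γ (0, 0) ((n : ℤ), (n : ℤ))) :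
    γ.length = 2 * n + 1 := by
  have := path_length_phi h
  simp only [Prod.fst, Prod.snd] at this
  omega

lemma path_fst_mono (h : IsUpRightPath γ u v) :
    ∀ k m, k + m < γ.length → (γ.getD k (0, 0)).1 ≤ (γ.getD (k + m) (0, 0)).1 := by
  intro k m
  induction m with
  | zero => intro _; exact le_refl _
  | succ m ih =>
      intro hm
      have h1 := ih (by omega)
      have h2 := upStep_fst (path_chain h (k := k + m) (by omega))
      calc (γ.getD k (0,0)).1 ≤ (γ.getD (k+m) (0,0)).1 := h1
        _ ≤ (γ.getD (k+m+1) (0,0)).1 := h2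
        _ = (γ.getD (k+(m+1)) (0,0)).1 := by ring_nf

lemma path_snd_mono (h : IsUpRightPath γ u v) :
    ∀ k m, k + m < γ.length → (γ.getD k (0, 0)).2 ≤ (γ.getD (k + m) (0, 0)).2 := by
  intro k m
  induction m with
  | zero => intro _; exact le_refl _
  | succ m ih =>
      intro hm
      have h1 := ih (by omega)
      have h2 := upStep_snd (path_chain h (k := k + m) (by omega))
      calc (γ.getD k (0,0)).2 ≤ (γ.getD (k+m) (0,0)).2 := h1
        _ ≤ (γ.getD (k+m+1) (0,0)).2 := h2
        _ = (γ.getD (k+(m+1)) (0,0)).2 := by ring_nf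

lemma path_mem_bounds {n : ℕ} (h : IsUpRightPath γ (0, 0) ((n : ℤ), (n : ℤ)))
    {p : ℤ × ℤ} (hp : p ∈ γ) : 0 ≤ p.1 ∧ p.1 ≤ n ∧ 0 ≤ p.2 ∧ p.2 ≤ n := by
  obtain ⟨k, hk, rfl⟩ := List.mem_iff_getElem.mp hp
  have hgd : γ[k] = γ.getD k (0,0) := (List.getD_eq_getElem _ _ hk).symm
  rw [hgd]
  have hL : 0 < γ.length := path_length_pos h
  have h1 := path_fst_mono h 0 k (by omega)
  have h2 := path_snd_mono h 0 k (by omega)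
  have h3 := path_fst_mono h k (γ.length - 1 - k) (by omega)
  have h4 := path_snd_mono h k (γ.length - 1 - k) (by omega)
  have hke : k + (γ.length - 1 - k) = γ.length - 1 := by omega
  rw [hke] at h3 h4
  rw [Nat.zero_add] at h1 h2
  rw [path_getD_zero h] at h1 h2
  rw [path_getD_last h] at h3 h4
  simp only [Prod.fst, Prod.snd] at h1 h2 h3 h4
  exact ⟨h1, h3, h2, h4⟩




variable {γ δ : List (ℤ × ℤ)} {u v : ℤ × ℤ} {ω : Config}

lemma pathTime_eq_sum (ω : Config) (γ : List (ℤ × ℤ)) :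
    pathTime ω γ = ∑ k ∈ Finset.range (γ.length - 1), ω (γ.getD k (0, 0)) := by
  have h : γ.dropLast.map ω = List.ofFn (fun i : Fin (γ.length - 1) => ω (γ.getD i (0, 0))) := by
    apply List.ext_getElem
    · simp
    · intro i h1 h2
      have hi : i < γ.length - 1 := by simpa using h2
      have hi2 : i < γ.dropLast.length := by simpa using hi
      rw [List.getElem_map, List.getElem_ofFn, List.getElem_dropLast,
        List.getD_eq_getElem _ _ (by omega)]
  rw [pathTime, h, List.sum_ofFn]
  exact Fin.sum_univ_eq_sum_range (fun k => ω (γ.getD k (0, 0))) (γ.length - 1)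

/-- The sum of weights over the vertex window `[i, j)` of a path. -/
noncomputable def midsum (ω : Config) (γ : List (ℤ × ℤ)) (i j : ℕ) : ℝ :=
  ∑ k ∈ Finset.Ico i j, ω (γ.getD k (0, 0))

/-- The path following `γ` on the index window `[i, j)` and `δ` elsewhere. -/
noncomputable def splice (γ δ : List (ℤ × ℤ)) (i j : ℕ) : List (ℤ × ℤ) :=
  List.ofFn (fun k : Fin δ.length =>
    if i ≤ (k : ℕ) ∧ (k : ℕ) < j then γ.getD k (0, 0) else δ.getD k (0, 0))

lemma splice_length (i j : ℕ) : (splice γ δ i j).length = δ.length := by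
  simp [splice]

lemma splice_getD {i j k : ℕ} (hk : k < δ.length) :
    (splice γ δ i j).getD k (0, 0) =
      if i ≤ k ∧ k < j then γ.getD k (0, 0) else δ.getD k (0, 0) := by
  have hk' : k < (splice γ δ i j).length := by rw [splice_length]; exact hk
  rw [List.getD_eq_getElem _ _ hk']
  simp [splice, hk]

lemma splice_isPath (hγ : IsUpRightPath γ u v) (hδ : IsUpRightPath δ u v)
    (hlen : γ.length = δ.length)
    (hi : γ.getD i (0, 0) = δ.getD i (0, 0)) (hj : γ.getD j (0, 0) = δ.getD j (0, 0))
    (hij : i < j) (hjL : j < δ.length) :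
    IsUpRightPath (splice γ δ i j) u v := by
  have h0 : 0 < δ.length := path_length_pos hδ
  have hsl : (splice γ δ i j).length = δ.length := splice_length i j
  refine ⟨?_, ?_, ?_⟩
  · have hk1 : 0 < (splice γ δ i j).length := by omega
    rw [List.head?_eq_getElem?, List.getElem?_eq_getElem hk1,
      ← List.getD_eq_getElem _ (0, 0) hk1, splice_getD h0]
    split_ifs with hc
    · rw [path_getD_zero hγ]
    · rw [path_getD_zero hδ]
  · have hk1 : δ.length - 1 < (splice γ δ i j).length := by omega
    rw [List.getLast?_eq_getElem?, hsl, List.getElem?_eq_getElem hk1,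
      ← List.getD_eq_getElem _ (0, 0) hk1, splice_getD (by omega),
      if_neg (by omega), path_getD_last hδ]
  · refine List.isChain_iff_getElem.mpr ?_
    intro k hk
    rw [hsl] at hk
    have hk1 : k < (splice γ δ i j).length := by rw [hsl]; omega
    have hk2 : k + 1 < (splice γ δ i j).length := by rw [hsl]; omega
    rw [← List.getD_eq_getElem _ (0, 0) hk1, ← List.getD_eq_getElem _ (0, 0) hk2,
      splice_getD (show k < δ.length by omega),
      splice_getD (show k + 1 < δ.length by omega)]
    by_cases c1 : i ≤ k ∧ k < j <;> by_cases c2 : i ≤ k + 1 ∧ k + 1 < j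
    · rw [if_pos c1, if_pos c2]
      exact path_chain hγ (by omega)
    · rw [if_pos c1, if_neg c2]
      have hkj : k + 1 = j := by omega
      subst hkj
      rw [← hj]
      exact path_chain hγ (by omega)
    · rw [if_neg c1, if_pos c2]
      have hki : k + 1 = i := by omega
      subst hki
      rw [hi]
      exact path_chain hδ (by omega)
    · rw [if_neg c1, if_neg c2]
      exact path_chain hδ (by omega)

lemma splice_pathTime (hlen : γ.length = δ.length) (h0 : 0 < δ.length)
    (hjL : j < δ.length) :
    pathTime ω (splice γ δ i j) = pathTime ω δ - midsum ω δ i j + midsum ω γ i j := by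
  rw [pathTime_eq_sum, pathTime_eq_sum, splice_length]
  have hsub : Finset.Ico i j ⊆ Finset.range (δ.length - 1) := by
    intro k hk
    simp only [Finset.mem_Ico] at hk
    simp only [Finset.mem_range]
    omega
  rw [← Finset.sum_sdiff hsub, ← Finset.sum_sdiff hsub
    (f := fun k => ω (δ.getD k (0, 0)))]
  have e1 : ∑ k ∈ Finset.range (δ.length - 1) \ Finset.Ico i j,
      ω ((splice γ δ i j).getD k (0, 0)) =
      ∑ k ∈ Finset.range (δ.length - 1) \ Finset.Ico i j, ω (δ.getD k (0, 0)) := by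
    refine Finset.sum_congr rfl fun k hk => ?_
    simp only [Finset.mem_sdiff, Finset.mem_range, Finset.mem_Ico] at hk
    rw [splice_getD (by omega), if_neg (by omega)]
  have e2 : ∑ k ∈ Finset.Ico i j, ω ((splice γ δ i j).getD k (0, 0)) = midsum ω γ i j := by
    refine Finset.sum_congr rfl fun k hk => ?_
    simp only [Finset.mem_Ico] at hk
    rw [splice_getD (by omega), if_pos (by omega)]
  rw [e1, e2]
  simp only [midsum]
  ring

lemma TR_le_pathTime (hω : ∀ u, 0 ≤ ω u) (R : Set (ℤ × ℤ)) (γ : List (ℤ × ℤ)) :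
    TR ω R γ ≤ pathTime ω γ := by
  unfold TR pathTime
  refine List.sum_le_sum fun p _ => ?_
  by_cases hp : p ∈ Rᶜ
  · rw [Set.indicator_of_mem hp]
  · rw [Set.indicator_of_notMem hp]
    exact hω p

lemma TR_eq_pathTime (R : Set (ℤ × ℤ)) (h : ∀ p ∈ γ, p ∉ R) :
    TR ω R γ = pathTime ω γ := by
  unfold TR pathTime
  congr 1
  refine List.map_congr_left fun p hp => ?_
  have : p ∈ γ := (List.dropLast_sublist γ).mem hp
  exact Set.indicator_of_mem (Set.mem_compl (h p this)) ω

lemma bddAbove_paths (hω : ∀ u, 0 ≤ ω u) (n : ℕ) :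
    BddAbove (pathTime ω '' {γ | IsUpRightPath γ (0, 0) ((n : ℤ), (n : ℤ))}) := by
  classical
  refine ⟨∑ p ∈ (Finset.Icc (0 : ℤ) n) ×ˢ (Finset.Icc (0 : ℤ) n), ω p, ?_⟩
  rintro x ⟨γ, hγ, rfl⟩
  rw [pathTime_eq_sum]
  have hinj : ∀ k ∈ Finset.range (γ.length - 1), ∀ l ∈ Finset.range (γ.length - 1),
      γ.getD k (0, 0) = γ.getD l (0, 0) → k = l := by
    intro k hk l hl he
    simp only [Finset.mem_range] at hk hl
    have h1 := path_phi hγ k (by omega)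
    have h2 := path_phi hγ l (by omega)
    rw [he] at h1
    omega
  rw [← Finset.sum_image hinj]
  refine Finset.sum_le_sum_of_subset_of_nonneg ?_ (fun p _ _ => hω p)
  intro p hp
  simp only [Finset.mem_image, Finset.mem_range] at hp
  obtain ⟨k, hk, rfl⟩ := hp
  have hmem : γ.getD k (0, 0) ∈ γ := by
    rw [List.getD_eq_getElem _ _ (by omega)]
    exact List.getElem_mem _
  have hb := path_mem_bounds hγ hmem
  simp only [Finset.mem_product, Finset.mem_Icc]
  exact ⟨⟨hb.1, hb.2.1⟩, hb.2.2⟩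

lemma pathTime_le_lpt (hω : ∀ u, 0 ≤ ω u) {n : ℕ} {ε : List (ℤ × ℤ)}
    (hε : IsUpRightPath ε (0, 0) ((n : ℤ), (n : ℤ))) :
    pathTime ω ε ≤ lpt ω (0, 0) ((n : ℤ), (n : ℤ)) :=
  le_csSup (bddAbove_paths hω n) ⟨ε, hε, rfl⟩





lemma pt_ext {p q : ℤ × ℤ} (h1 : p.1 + p.2 = q.1 + q.2) (h2 : p.2 - p.1 = q.2 - q.1) :
    p = q := by
  obtain ⟨a, b⟩ := p; obtain ⟨c, d⟩ := q
  simp only [Prod.mk.injEq] at *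
  omega

lemma key (ω : Config) (hω0 : ∀ u, 0 ≤ ω u)
    (hdist : ∀ S T : Finset (ℤ × ℤ), S.Nonempty → Disjoint S T →
      (∑ u ∈ S, ω u) ≠ ∑ u ∈ T, ω u)
    (n r : ℕ) (hrn : r ≤ n) (t : ℝ)
    (γR γn : List (ℤ × ℤ)) (hmax : IsTRMax ω (Rbox r t) n γR)
    (hbelow : LiesBelow γR r t)
    (hψR : ∀ p ∈ γR, p.1 + p.2 = (r : ℤ) → 0 ≤ p.2 - p.1)
    (hgeo : IsGeodesic ω γn (0, 0) ((n : ℤ), (n : ℤ))) :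
    ∀ p ∈ γn, p.1 + p.2 = (r : ℤ) → 0 ≤ p.2 - p.1 := by
  classical
  by_contra hcon
  push_neg at hcon
  obtain ⟨p, hpmem, hpφ, hpψ⟩ := hcon
  have hγRp : IsUpRightPath γR (0, 0) ((n : ℤ), (n : ℤ)) := hmax.1
  have hγnp : IsUpRightPath γn (0, 0) ((n : ℤ), (n : ℤ)) := hgeo.1
  have hLR : γR.length = 2 * n + 1 := path_length_oN hγRp
  have hLn : γn.length = 2 * n + 1 := path_length_oN hγnp
  have φn : ∀ k, k < γn.length →
      (γn.getD k (0, 0)).1 + (γn.getD k (0, 0)).2 = (k : ℤ) := by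
    intro k hk; have := path_phi hγnp k hk; simpa using this
  have φR : ∀ k, k < γR.length →
      (γR.getD k (0, 0)).1 + (γR.getD k (0, 0)).2 = (k : ℤ) := by
    intro k hk; have := path_phi hγRp k hk; simpa using this
  have hpk : p = γn.getD r (0, 0) := by
    obtain ⟨k, hk, hkp⟩ := List.mem_iff_getElem.mp hpmem
    have he : γn.getD k (0, 0) = p := by rw [List.getD_eq_getElem _ _ hk]; exact hkp
    have hφ := φn k hk
    rw [he, hpφ] at hφ
    have : k = r := by omega
    rw [← he, this]
  set D : ℕ → ℤ := fun k =>
    (γn.getD k (0, 0)).2 - (γn.getD k (0, 0)).1 -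
      ((γR.getD k (0, 0)).2 - (γR.getD k (0, 0)).1) with hDdef
  have hDr : D r < 0 := by
    have h1 : (γn.getD r (0, 0)).2 - (γn.getD r (0, 0)).1 < 0 := by rw [← hpk]; exact hpψ
    have h2 : 0 ≤ (γR.getD r (0, 0)).2 - (γR.getD r (0, 0)).1 := by
      apply hψR
      · rw [List.getD_eq_getElem _ _ (by omega)]; exact List.getElem_mem _
      · exact φR r (by omega)
    simp only [hDdef]; omega
  have hD0 : D 0 = 0 := by
    simp only [hDdef]
    rw [path_getD_zero hγnp, path_getD_zero hγRp]
    norm_num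
  have egn : γn.getD (2 * n) (0, 0) = ((n : ℤ), (n : ℤ)) := by
    have := path_getD_last hγnp; rw [hLn] at this; simpa using this
  have egR : γR.getD (2 * n) (0, 0) = ((n : ℤ), (n : ℤ)) := by
    have := path_getD_last hγRp; rw [hLR] at this; simpa using this
  have hD2n : D (2 * n) = 0 := by
    simp only [hDdef]
    rw [egn, egR]
    ring
  have hDeven : ∀ k, k < γn.length → ∃ m, D k = 2 * m := by
    intro k hk
    refine ⟨(γR.getD k (0, 0)).1 - (γn.getD k (0, 0)).1, ?_⟩
    have h1 := φn k hk
    have h2 := φR k (by omega)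
    simp only [hDdef]; omega
  have hDstep : ∀ k, k + 1 < γn.length → D (k + 1) ≤ D k + 2 ∧ D k ≤ D (k + 1) + 2 := by
    intro k hk
    have h1 := upStep_psi (path_chain hγnp hk)
    have h2 := upStep_psi (path_chain hγRp (k := k) (by omega))
    rcases h1 with h1 | h1 <;> rcases h2 with h2 | h2 <;> simp only [hDdef] <;> omega
  set i := Nat.findGreatest (fun k => D k = 0) r with hidef
  have hiR : i ≤ r := Nat.findGreatest_le r
  have hDi : D i = 0 := Nat.findGreatest_spec (P := fun k => D k = 0) (Nat.zero_le r) hD0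
  have hgt : ∀ k, i < k → k ≤ r → D k ≠ 0 := fun k h1 h2 =>
    Nat.findGreatest_is_greatest (P := fun k => D k = 0) h1 h2
  have hir : i < r := by
    rcases lt_or_eq_of_le hiR with h | h
    · exact h
    · exact absurd (h ▸ hDi) (by omega)
  have hex : ∃ m, D (r + m) = 0 :=
    ⟨2 * n - r, by rw [show r + (2 * n - r) = 2 * n by omega]; exact hD2n⟩
  set j := r + Nat.find hex with hjdef
  have hDj : D j = 0 := Nat.find_spec hex
  have hjlt : ∀ k, r ≤ k → k < j → D k ≠ 0 := by
    intro k h1 h2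
    have h3 := Nat.find_min hex (m := k - r) (by omega)
    have h4 : r + (k - r) = k := by omega
    rwa [h4] at h3
  have hrj : r < j := by
    rcases Nat.lt_or_ge r j with h | h
    · exact h
    · exact absurd (by rw [show r = j by omega] at hDr; omega : False) id
  have hj2n : j ≤ 2 * n := by
    have := Nat.find_min' hex (m := 2 * n - r)
      (by rw [show r + (2 * n - r) = 2 * n by omega]; exact hD2n)
    omega
  have hneg : ∀ k, i < k → k < j → D k < 0 := by
    have down : ∀ m, i < r - m → D (r - m) < 0 := by
      intro m
      induction m with
      | zero => intro _; simpa using hDr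
      | succ m ih =>
          intro hm
          have h1 := ih (by omega)
          have h2 := hDstep (r - (m + 1)) (by omega)
          rw [show r - (m + 1) + 1 = r - m by omega] at h2
          have h3 := hgt (r - (m + 1)) (by omega) (by omega)
          obtain ⟨mm, hmm⟩ := hDeven (r - m) (by omega)
          omega
    have up : ∀ m, r + m < j → D (r + m) < 0 := by
      intro m
      induction m with
      | zero => intro _; simpa using hDr
      | succ m ih =>
          intro hm
          have h1 := ih (by omega)
          have h2 := hDstep (r + m) (by omega)
          have h3 := hjlt (r + m + 1) (by omega) (by omega)
          obtain ⟨mm, hmm⟩ := hDeven (r + m) (by omega)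
          rw [show r + (m + 1) = r + m + 1 by omega]
          omega
    intro k h1 h2
    rcases le_or_gt k r with h | h
    · have := down (r - k) (by omega)
      rwa [show r - (r - k) = k by omega] at this
    · have := up (k - r) (by omega)
      rwa [show r + (k - r) = k by omega] at this
  have hgi : γn.getD i (0, 0) = γR.getD i (0, 0) := by
    apply pt_ext
    · rw [φn i (by omega), φR i (by omega)]
    · simp only [hDdef] at hDi; omega
  have hgj : γn.getD j (0, 0) = γR.getD j (0, 0) := by
    apply pt_ext
    · rw [φn j (by omega), φR j (by omega)]
    · simp only [hDdef] at hDj; omega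
  have hRmem : ∀ q ∈ γR, q ∉ Rbox r t := hbelow.1
  have hmemR : ∀ k, k < γR.length → γR.getD k (0, 0) ∈ γR := by
    intro k hk
    rw [List.getD_eq_getElem _ _ hk]; exact List.getElem_mem _
  have hmemn : ∀ k, k < γn.length → γn.getD k (0, 0) ∈ γn := by
    intro k hk
    rw [List.getD_eq_getElem _ _ hk]; exact List.getElem_mem _
  have havoid : ∀ k, i ≤ k → k < j → γn.getD k (0, 0) ∉ Rbox r t := by
    intro k h1 h2
    rcases eq_or_lt_of_le h1 with he | hlt
    · rw [← he, hgi]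
      exact hRmem _ (hmemR i (by omega))
    · intro hmem
      simp only [Rbox, Set.mem_setOf_eq] at hmem
      obtain ⟨c1, c2, c3, c4⟩ := hmem
      have hφk := φn k (by omega)
      have hφRk := φR k (by omega)
      rw [hφk] at c1 c2
      have hRb := hbelow.2 (γR.getD k (0, 0)) (hmemR k (by omega))
        (by rw [hφRk]; exact c1) (by rw [hφRk]; exact c2)
      have hDk := hneg k hlt h2
      have hlt2 : (γn.getD k (0, 0)).2 - (γn.getD k (0, 0)).1 <
          (γR.getD k (0, 0)).2 - (γR.getD k (0, 0)).1 := by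
        simp only [hDdef] at hDk; omega
      have hlt3 : (((γn.getD k (0, 0)).2 - (γn.getD k (0, 0)).1 : ℤ) : ℝ) <
          (((γR.getD k (0, 0)).2 - (γR.getD k (0, 0)).1 : ℤ) : ℝ) := by exact_mod_cast hlt2
      linarith
  -- midsum identities
  set ω' : Config := (Rbox r t)ᶜ.indicator ω with hω'def
  have hmidn : midsum ω' γn i j = midsum ω γn i j := by
    refine Finset.sum_congr rfl fun k hk => ?_
    simp only [Finset.mem_Ico] at hk
    exact Set.indicator_of_mem (Set.mem_compl (havoid k hk.1 hk.2)) ω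
  have hmidR : midsum ω' γR i j = midsum ω γR i j := by
    refine Finset.sum_congr rfl fun k hk => ?_
    simp only [Finset.mem_Ico] at hk
    exact Set.indicator_of_mem (Set.mem_compl (hRmem _ (hmemR k (by omega)))) ω
  -- splice inequalities
  have hsp1 : IsUpRightPath (splice γR γn i j) (0, 0) ((n : ℤ), (n : ℤ)) :=
    splice_isPath hγRp hγnp (by omega) hgi.symm hgj.symm (by omega) (by omega)
  have hd1 := splice_pathTime (ω := ω) (γ := γR) (δ := γn) (i := i) (j := j)
    (by omega) (by omega) (by omega)
  have hineq1 : pathTime ω (splice γR γn i j) ≤ pathTime ω γn := by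
    rw [hgeo.2]; exact pathTime_le_lpt hω0 hsp1
  have hms1 : midsum ω γR i j ≤ midsum ω γn i j := by linarith
  have hsp2 : IsUpRightPath (splice γn γR i j) (0, 0) ((n : ℤ), (n : ℤ)) :=
    splice_isPath hγnp hγRp (by omega) hgi hgj (by omega) (by omega)
  have hd2 := splice_pathTime (ω := ω') (γ := γn) (δ := γR) (i := i) (j := j)
    (by omega) (by omega) (by omega)
  have hineq2 : pathTime ω' (splice γn γR i j) ≤ pathTime ω' γR := hmax.2 _ hsp2
  have hms2 : midsum ω γn i j ≤ midsum ω γR i j := by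
    rw [← hmidn, ← hmidR]; linarith
  have heq : midsum ω γn i j = midsum ω γR i j := le_antisymm hms2 hms1
  -- convert to sums over vertex sets
  set A : Finset (ℤ × ℤ) := (Finset.Ico i j).image (fun k => γn.getD k (0, 0)) with hAdef
  set B : Finset (ℤ × ℤ) := (Finset.Ico i j).image (fun k => γR.getD k (0, 0)) with hBdef
  have hsumA : ∑ q ∈ A, ω q = midsum ω γn i j := by
    refine Finset.sum_image fun k hk l hl he => ?_
    simp only [Finset.mem_coe, Finset.mem_Ico] at hk hl
    have e1 := φn k (by omega)
    have e2 := φn l (by omega)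
    rw [he] at e1
    omega
  have hsumB : ∑ q ∈ B, ω q = midsum ω γR i j := by
    refine Finset.sum_image fun k hk l hl he => ?_
    simp only [Finset.mem_coe, Finset.mem_Ico] at hk hl
    have e1 := φR k (by omega)
    have e2 := φR l (by omega)
    rw [he] at e1
    omega
  have hAB : ∑ q ∈ A, ω q = ∑ q ∈ B, ω q := by rw [hsumA, hsumB, heq]
  have h1 := Finset.sum_inter_add_sum_sdiff A B ω
  have h2 := Finset.sum_inter_add_sum_sdiff B A ω
  rw [Finset.inter_comm B A] at h2
  have hdiffeq : ∑ q ∈ A \ B, ω q = ∑ q ∈ B \ A, ω q := by linarith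
  have hmemA : γn.getD r (0, 0) ∈ A \ B := by
    rw [Finset.mem_sdiff]
    constructor
    · exact Finset.mem_image.mpr ⟨r, Finset.mem_Ico.mpr ⟨by omega, hrj⟩, rfl⟩
    · intro hB
      obtain ⟨k, hk, hke⟩ := Finset.mem_image.mp hB
      simp only [Finset.mem_Ico] at hk
      have e1 := φR k (by omega)
      have e2 := φn r (by omega)
      rw [hke] at e1
      have hkr : k = r := by omega
      rw [hkr] at hke
      have : D r = 0 := by simp only [hDdef]; rw [hke]; ring
      omega
  exact hdist (A \ B) (B \ A) ⟨_, hmemA⟩ disjoint_sdiff_sdiff hdiffeq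

open MeasureTheory ProbabilityTheory


lemma expMeasure_singleton (y : ℝ) : expMeasure 1 {y} = 0 := by
  rw [expMeasure, gammaMeasure]
  exact withDensity_absolutelyContinuous volume _ Real.volume_singleton

lemma expMeasure_Iio_zero : expMeasure 1 (Set.Iio 0) = 0 := by
  rw [expMeasure, gammaMeasure, withDensity_apply _ measurableSet_Iio]
  rw [setLIntegral_congr_fun measurableSet_Iio
    (fun x hx => gammaPDF_of_neg hx)]
  simp


/-- **`E^R ⊆ E`.** Almost surely, if the maximizer `Γ^R` of the discounted passage time lies
below `R` and has `ψ(Γ^R(r)) ≥ 0`, then the geodesic `Γ_n` satisfies `ψ(Γ_n(r)) ≥ 0`: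
increasing the weights in `R` from `0` can only increase the transversal fluctuation at `𝓛_r`. -/
theorem ER_subset_E
    {Ω : Type*} [MeasurableSpace Ω] (P : Measure Ω) [IsProbabilityMeasure P]
    (X : ℤ × ℤ → Ω → ℝ) (hX : IsIIDExp P X)
    (n r : ℕ) (hr : 1 ≤ r) (hrn : r ≤ n) (t : ℝ) (ht : 0 < t) :
    ∀ᵐ ω ∂P,
      ∀ γR γn : List (ℤ × ℤ), IsTRMax (fun w => X w ω) (Rbox r t) n γR →
        LiesBelow γR r t →
        (∀ p ∈ γR, p.1 + p.2 = (r : ℤ) → 0 ≤ p.2 - p.1) →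
        IsGeodesic (fun w => X w ω) γn (0, 0) ((n : ℤ), (n : ℤ)) →
        ∀ p ∈ γn, p.1 + p.2 = (r : ℤ) → 0 ≤ p.2 - p.1 := by
  classical
  obtain ⟨hXm, hXi, hXd⟩ := hX
  have E1 : ∀ᵐ ω ∂P, ∀ u : ℤ × ℤ, 0 ≤ X u ω := by
    rw [ae_all_iff]
    intro u
    rw [ae_iff]
    have hset : {ω | ¬ 0 ≤ X u ω} = X u ⁻¹' (Set.Iio 0) := by
      ext ω; simp [not_le]
    rw [hset, ← Measure.map_apply (hXm u) measurableSet_Iio, hXd u]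
    exact expMeasure_Iio_zero
  have E2 : ∀ᵐ ω ∂P, ∀ S T : Finset (ℤ × ℤ), S.Nonempty → Disjoint S T →
      (∑ u ∈ S, X u ω) ≠ ∑ u ∈ T, X u ω := by
    rw [ae_all_iff]
    intro S
    rw [ae_all_iff]
    intro T
    by_cases hST : S.Nonempty ∧ Disjoint S T
    · obtain ⟨⟨s0, hs0⟩, hd⟩ := hST
      set F : Finset (ℤ × ℤ) := T ∪ S.erase s0 with hF
      have hs0F : s0 ∉ F := by
        simp only [hF, Finset.mem_union, Finset.mem_erase, not_or]
        exact ⟨Finset.disjoint_left.mp hd hs0, fun h => h.1 rfl⟩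
      set Y : Ω → ℝ := fun a => (∑ u ∈ T, X u a) - ∑ u ∈ S.erase s0, X u a with hY
      have mY : Measurable Y :=
        (Finset.measurable_sum T fun u _ => hXm u).sub
          (Finset.measurable_sum _ fun u _ => hXm u)
      have hIndep : IndepFun Y (X s0) P := by
        have h1 := hXi.indepFun_finset F {s0}
          (by rw [Finset.disjoint_singleton_right]; exact hs0F) hXm
        have hTF : T ⊆ F := Finset.subset_union_left
        have hEF : S.erase s0 ⊆ F := Finset.subset_union_right
        set g2 : (F → ℝ) → ℝ := fun v =>
          (∑ u ∈ F.attach, if (u : ℤ × ℤ) ∈ T then v u else 0) -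
            ∑ u ∈ F.attach, if (u : ℤ × ℤ) ∈ S.erase s0 then v u else 0 with hg2
        set g1 : (({s0} : Finset (ℤ × ℤ)) → ℝ) → ℝ :=
          fun v => v ⟨s0, Finset.mem_singleton_self s0⟩ with hg1
        have mg2 : Measurable g2 := by
          apply Measurable.sub
          · apply Finset.measurable_sum
            intro u _
            split_ifs
            · exact measurable_pi_apply u
            · exact measurable_const
          · apply Finset.measurable_sum
            intro u _
            split_ifs
            · exact measurable_pi_apply u
            · exact measurable_const
        have mg1 : Measurable g1 := measurable_pi_apply _
        have h2 := h1.comp mg2 mg1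
        have e2 : (g2 ∘ fun a (i : F) => X i a) = Y := by
          funext a
          simp only [Function.comp, hg2, hY]
          congr 1
          · rw [Finset.sum_attach F (fun u => if u ∈ T then X u a else 0),
              Finset.sum_ite_mem, Finset.inter_eq_right.mpr hTF]
          · rw [Finset.sum_attach F (fun u => if u ∈ S.erase s0 then X u a else 0),
              Finset.sum_ite_mem, Finset.inter_eq_right.mpr hEF]
        have e1 : (g1 ∘ fun a (i : ({s0} : Finset (ℤ × ℤ))) => X i a) = X s0 := rfl
        rwa [e2, e1] at h2
      have hprob : IsProbabilityMeasure (expMeasure 1) :=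
        isProbabilityMeasure_expMeasure one_pos
      have hpair : Measurable fun a => (Y a, X s0 a) := mY.prodMk (hXm s0)
      have hmap : P.map (fun a => (Y a, X s0 a)) = (P.map Y).prod (P.map (X s0)) :=
        (indepFun_iff_map_prod_eq_prod_map_map mY.aemeasurable
          (hXm s0).aemeasurable).mp hIndep
      rw [hXd s0] at hmap
      have hsetm : MeasurableSet {q : ℝ × ℝ | q.1 = q.2} :=
        measurableSet_eq_fun measurable_fst measurable_snd
      have hz : P {a | Y a = X s0 a} = 0 := by
        have hpre : {a | Y a = X s0 a} = (fun a => (Y a, X s0 a)) ⁻¹' {q : ℝ × ℝ | q.1 = q.2} :=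
          rfl
        rw [hpre, ← Measure.map_apply hpair hsetm, hmap, Measure.prod_apply hsetm]
        have hsec : ∀ y : ℝ, (expMeasure 1) (Prod.mk y ⁻¹' {q : ℝ × ℝ | q.1 = q.2}) = 0 := by
          intro y
          have : Prod.mk y ⁻¹' {q : ℝ × ℝ | q.1 = q.2} = {y} := by
            ext x; simp [eq_comm]
          rw [this]
          exact expMeasure_singleton y
        simp only [hsec]
        simp
      rw [ae_iff]
      refine measure_mono_null ?_ hz
      intro a ha
      simp only [Set.mem_setOf_eq, not_forall] at ha
      obtain ⟨_, _, hEq⟩ := ha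
      have hEq' : (∑ u ∈ S, X u a) = ∑ u ∈ T, X u a := not_not.mp hEq
      simp only [Set.mem_setOf_eq, hY]
      have hsplit : X s0 a + ∑ u ∈ S.erase s0, X u a = ∑ u ∈ S, X u a :=
        Finset.add_sum_erase S (fun u => X u a) hs0
      linarith
    · exact Filter.Eventually.of_forall fun ω h1 h2 => absurd ⟨h1, h2⟩ hST
  filter_upwards [E1, E2] with ω h1 h2
  intro γR γn hmax hbelow hψR hgeo
  exact key (fun w => X w ω) h1 h2 n r hrn t γR γn hmax hbelow hψR hgeo
end LPP
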